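/- Let n ≥ 1 be an integer, ξ ∈ ℂⁿ a vector, and β, δ real numbers. Let L be the n×n complex matrix with entries L_{jk} = β·δ_{jk} + δ·ξ_j·conj(ξ_k). Then det(I − exp(−L)) = (1 − e^{−β})^{n−1}·(1 − e^{−(β + δ·‖ξ‖²)}), where ‖ξ‖² = Σ_j |ξ_j|² and exp denotes the matrix exponential. -/

import Mathlib

open NormedSpace

noncomputable def Tc (a : ℂ) : ℂ := ∑' k : ℕ, ((Nat.factorial (k + 1) : ℂ))⁻¹ * a ^ k

lemma Tc_summable (a : ℂ) :
    Summable fun k : ℕ => ((Nat.factorial (k + 1) : ℂ))⁻¹ * a ^ k := by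
  refine Summable.of_norm_bounded (Real.summable_pow_div_factorial ‖a‖) fun k => ?_
  rw [norm_mul, norm_pow, norm_inv]
  have h1 : ‖((Nat.factorial (k + 1) : ℂ))‖ = (Nat.factorial (k + 1) : ℝ) := by
    simp
  rw [h1, div_eq_inv_mul]
  have h2 : ((Nat.factorial (k + 1) : ℝ))⁻¹ ≤ ((Nat.factorial k : ℝ))⁻¹ := by
    apply inv_anti₀
    · positivity
    · exact_mod_cast Nat.factorial_le (Nat.le_succ k)
  exact mul_le_mul_of_nonneg_right h2 (pow_nonneg (norm_nonneg a) k)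

lemma exp_Tc (a : ℂ) : Complex.exp a = 1 + a * Tc a := by
  rw [Complex.exp_eq_exp_ℂ]
  simp only [exp_eq_tsum ℂ]
  rw [Summable.tsum_eq_zero_add (expSeries_summable' (𝕂 := ℂ) a)]
  simp only [pow_zero, Nat.factorial_zero, Nat.cast_one, inv_one, smul_eq_mul, one_mul]
  congr 1
  rw [Tc, ← tsum_mul_left]
  refine tsum_congr fun k => ?_
  rw [pow_succ]
  ring

lemma exp_sq {𝔸 : Type*} [NormedRing 𝔸] [NormedAlgebra ℂ 𝔸] [CompleteSpace 𝔸]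
    (A : 𝔸) (a : ℂ) (h : A * A = a • A) : exp A = 1 + Tc a • A := by
  have hpow : ∀ k : ℕ, A ^ (k + 1) = a ^ k • A := by
    intro k
    induction k with
    | zero => simp
    | succ k ih =>
      rw [pow_succ, ih, smul_mul_assoc, h, smul_smul, ← pow_succ]
  simp only [exp_eq_tsum ℂ]
  rw [Summable.tsum_eq_zero_add (expSeries_summable' (𝕂 := ℂ) A)]
  simp only [hpow, pow_zero, Nat.factorial_zero, Nat.cast_one, inv_one, one_smul, smul_smul]
  rw [Summable.tsum_smul_const (Tc_summable a)]
  rfl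

lemma matrix_exp_sq {n : Type*} [Fintype n] [DecidableEq n]
    (A : Matrix n n ℂ) (a : ℂ) (h : A * A = a • A) :
    exp A = 1 + Tc a • A := by
  letI : SeminormedRing (Matrix n n ℂ) := Matrix.linftyOpSemiNormedRing
  letI : NormedRing (Matrix n n ℂ) := Matrix.linftyOpNormedRing
  letI : NormedAlgebra ℂ (Matrix n n ℂ) := Matrix.linftyOpNormedAlgebra
  exact exp_sq A a h

lemma det_aux (n : ℕ) (hn : 1 ≤ n) (ξ : Fin n → ℂ) (α γ : ℂ) :
    (α • (1 : Matrix (Fin n) (Fin n) ℂ) +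
        γ • Matrix.of (fun j k => ξ j * (starRingEnd ℂ) (ξ k))).det
      = α ^ (n - 1) * (α + γ * ∑ j, (Complex.normSq (ξ j) : ℂ)) := by
  rcases eq_or_ne α 0 with h0 | h0
  · subst h0
    simp only [zero_smul, zero_add]
    rcases eq_or_lt_of_le hn with h1 | h1
    · -- n = 1
      have hne : n = 1 := h1.symm
      subst hne
      rw [Matrix.det_fin_one]
      simp [Complex.mul_conj, mul_comm]
    · -- n ≥ 2
      have hd : (Matrix.of (fun j k => ξ j * (starRingEnd ℂ) (ξ k)) :
          Matrix (Fin n) (Fin n) ℂ).det = 0 := by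
        rw [show (Matrix.of (fun j k => ξ j * (starRingEnd ℂ) (ξ k)) :
              Matrix (Fin n) (Fin n) ℂ)
            = Matrix.of (fun i j => ξ i *
              (Matrix.of fun _ j => (starRingEnd ℂ) (ξ j) : Matrix (Fin n) (Fin n) ℂ) i j)
            from rfl, Matrix.det_mul_column]
        have hz : (Matrix.of fun _ j => (starRingEnd ℂ) (ξ j) :
            Matrix (Fin n) (Fin n) ℂ).det = 0 :=
          Matrix.det_zero_of_row_eq (i := ⟨0, by omega⟩) (j := ⟨1, by omega⟩)
            (by simp [Fin.ext_iff]) rfl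
        rw [hz, mul_zero]
      rw [Matrix.det_smul, hd, mul_zero, zero_pow (by omega : n - 1 ≠ 0), zero_mul]
  · -- α ≠ 0
    have hrw : α • (1 : Matrix (Fin n) (Fin n) ℂ) +
          γ • Matrix.of (fun j k => ξ j * (starRingEnd ℂ) (ξ k))
        = α • ((1 : Matrix (Fin n) (Fin n) ℂ) +
            Matrix.replicateCol Unit ((γ / α) • ξ) * Matrix.replicateRow Unit (star ξ)) := by
      rw [smul_add]
      congr 1
      ext j k
      simp only [Matrix.smul_apply, Matrix.of_apply, Matrix.mul_apply, Matrix.replicateCol_apply,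
        Matrix.replicateRow_apply, Pi.smul_apply, Pi.star_apply, smul_eq_mul, Finset.univ_unique,
        Finset.sum_singleton, Complex.star_def]
      field_simp
    rw [hrw, Matrix.det_smul, Matrix.det_one_add_replicateCol_mul_replicateRow]
    have hs : dotProduct (star ξ) ((γ / α) • ξ) = (γ / α) * ∑ j, (Complex.normSq (ξ j) : ℂ) := by
      simp only [dotProduct, Pi.smul_apply, Pi.star_apply, smul_eq_mul,
        Complex.star_def, Finset.mul_sum]
      refine Finset.sum_congr rfl fun j _ => ?_
      rw [Complex.normSq_eq_conj_mul_self]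
      ring
    rw [hs, Fintype.card_fin]
    have hpow : α ^ n = α ^ (n - 1) * α := by
      rw [← pow_succ]
      congr 1
      omega
    rw [hpow]
    field_simp

theorem stmt18 (n : ℕ) (hn : 1 ≤ n) (ξ : Fin n → ℂ) (β δ : ℝ) :
    ∀ L : Matrix (Fin n) (Fin n) ℂ,
      (∀ j k, L j k = (β : ℂ) * (if j = k then 1 else 0) +
        (δ : ℂ) * ξ j * (starRingEnd ℂ) (ξ k)) →
    (1 - NormedSpace.exp (-L)).det =
      (1 - Complex.exp (-(β : ℂ))) ^ (n - 1) *
        (1 - Complex.exp (-((β : ℂ) + (δ : ℂ) *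
          ((∑ j, Complex.normSq (ξ j) : ℝ) : ℂ)))) := by
  intro L hL
  set S : ℂ := ((∑ j, Complex.normSq (ξ j) : ℝ) : ℂ) with hS
  set M : Matrix (Fin n) (Fin n) ℂ := Matrix.of (fun j k => ξ j * (starRingEnd ℂ) (ξ k)) with hM
  set a : ℂ := -(δ : ℂ) * S with ha
  set e : ℂ := Complex.exp (-(β : ℂ)) with he
  have hScast : S = ∑ j, (Complex.normSq (ξ j) : ℂ) := by
    rw [hS]; push_cast; rfl
  have hM2 : M * M = S • M := by
    ext j k
    simp only [hM, Matrix.mul_apply, Matrix.of_apply, Matrix.smul_apply, smul_eq_mul, hScast]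
    rw [Finset.sum_mul]
    refine Finset.sum_congr rfl fun l _ => ?_
    rw [Complex.normSq_eq_conj_mul_self]
    ring
  have hL' : -L = (-(β : ℂ)) • (1 : Matrix (Fin n) (Fin n) ℂ) + (-(δ : ℂ)) • M := by
    ext j k
    simp only [Matrix.neg_apply, hL j k, Matrix.add_apply, Matrix.smul_apply,
      Matrix.one_apply, hM, Matrix.of_apply, smul_eq_mul]
    split_ifs <;> ring
  have hcomm : Commute ((-(β : ℂ)) • (1 : Matrix (Fin n) (Fin n) ℂ)) ((-(δ : ℂ)) • M) :=
    ((Commute.one_left M).smul_left _).smul_right _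
  have h1 : exp ((-(β : ℂ)) • (1 : Matrix (Fin n) (Fin n) ℂ)) = e • 1 := by
    rw [matrix_exp_sq _ (-(β : ℂ)) (by rw [smul_mul_assoc, one_mul])]
    rw [he, exp_Tc, add_smul, one_smul, smul_smul]
    ring_nf
  have h2 : exp ((-(δ : ℂ)) • M) = 1 + (Tc a * (-(δ : ℂ))) • M := by
    rw [matrix_exp_sq _ a ?_, smul_smul]
    rw [smul_mul_assoc, mul_smul_comm, hM2, smul_smul, smul_smul, smul_smul]
    congr 1
    rw [ha]
    ring
  have hexp : exp (-L) = e • 1 + (e * (Tc a * (-(δ : ℂ)))) • M := by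
    rw [hL', Matrix.exp_add_of_commute _ _ hcomm, h1, h2, smul_mul_assoc, one_mul,
      smul_add, smul_smul]
  have key : (1 : Matrix (Fin n) (Fin n) ℂ) - exp (-L)
      = (1 - e) • 1 + (e * (δ : ℂ) * Tc a) • M := by
    rw [hexp]
    have : (e * ((δ : ℂ)) * Tc a) = -(e * (Tc a * (-(δ : ℂ)))) := by ring
    rw [this, sub_add_eq_sub_sub, neg_smul, sub_smul, one_smul]
    abel
  rw [key, hM, det_aux n hn ξ _ _, ← hScast]
  congr 1
  have hsplit : Complex.exp (-((β : ℂ) + (δ : ℂ) * S)) = e * Complex.exp a := by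
    rw [he, ha, ← Complex.exp_add]
    congr 1
    ring
  rw [hsplit, exp_Tc a, ha]
  ring
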